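/- Let ω be a primitive q-th root of unity in ℂ (q ≥ 1). Then the number of ℓ ∈ {0, 1, ..., q-1} such that the real part of ω^ℓ is positive equals 2·⌊(q-1)/4⌋ + 1. -/

import Mathlib

open Finset Polynomial Complex

lemma aux_count_re (q : ℕ) (hq : 1 ≤ q) :
    ((Finset.range q).filter fun j => 4*j < q ∨ 3*q < 4*j).card = 2 * ((q - 1) / 4) + 1 := by
  have h1 : (Finset.range q).filter (fun j => 4*j < q ∨ 3*q < 4*j)
      = Finset.range ((q+3)/4) ∪ Finset.Ico (3*q/4+1) q := by
    ext j; simp only [mem_filter, mem_range, mem_union, mem_Ico]; omega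
  rw [h1, Finset.card_union_of_disjoint]
  · rw [Finset.card_range, Nat.card_Ico]
    obtain ⟨m, r, hr, rfl⟩ : ∃ m r, r < 4 ∧ q = 4*m+r :=
      ⟨q/4, q%4, Nat.mod_lt _ (by norm_num), by omega⟩
    interval_cases r <;> omega
  · simp only [Finset.disjoint_left, mem_range, mem_Ico]; omega

lemma image_pow_eq_nthRootsFinset (q : ℕ) (hq : 1 ≤ q) (ω : ℂ) (hω : IsPrimitiveRoot ω q) :
    (Finset.range q).image (fun ℓ => ω ^ ℓ) = nthRootsFinset q (1 : ℂ) := by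
  apply Finset.eq_of_subset_of_card_le
  · intro z hz
    simp only [Finset.mem_image, Finset.mem_range] at hz
    obtain ⟨ℓ, _, rfl⟩ := hz
    rw [Polynomial.mem_nthRootsFinset (by omega) (1 : ℂ)]
    rw [← pow_mul, mul_comm, pow_mul, hω.pow_eq_one, one_pow]
  · rw [hω.card_nthRootsFinset, Finset.card_image_of_injOn hω.injOn_pow, Finset.card_range]

lemma card_filter_re_eq (q : ℕ) (hq : 1 ≤ q) (ω : ℂ) (hω : IsPrimitiveRoot ω q) :
    ((Finset.range q).filter fun ℓ => 0 < (ω ^ ℓ).re).card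
      = ((nthRootsFinset q (1 : ℂ)).filter fun z => 0 < z.re).card := by
  rw [← image_pow_eq_nthRootsFinset q hq ω hω, Finset.filter_image,
    Finset.card_image_of_injOn (hω.injOn_pow.mono (Finset.filter_subset _ _))]

lemma re_pos_iff_aux (q j : ℕ) (hq : 1 ≤ q) (hj : j < q) :
    0 < (Complex.exp (2 * Real.pi * Complex.I / q) ^ j).re ↔ (4*j < q ∨ 3*q < 4*j) := by
  have hq0 : (0:ℝ) < q := by exact_mod_cast hq
  rw [← Complex.exp_nat_mul]
  have harg : (j : ℂ) * (2 * Real.pi * Complex.I / q)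
      = ((2 * Real.pi * j / q : ℝ) : ℂ) * Complex.I := by
    push_cast; field_simp
  rw [harg, Complex.exp_ofReal_mul_I_re]
  set θ : ℝ := 2 * Real.pi * j / q with hθ
  have hθ0 : 0 ≤ θ := by positivity
  have hθ2 : θ < 2 * Real.pi := by
    rw [hθ, div_lt_iff₀ hq0]
    have : (j:ℝ) < q := by exact_mod_cast hj
    nlinarith [Real.pi_pos]
  have hlt : 4*j < q ↔ θ < Real.pi / 2 := by
    rw [hθ, div_lt_iff₀ hq0]
    constructor
    · intro h; have : (4*j:ℝ) < q := by exact_mod_cast h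
      nlinarith [Real.pi_pos]
    · intro h
      have : (4*j:ℝ) < q := by nlinarith [Real.pi_pos]
      exact_mod_cast this
  have hgt : 3*q < 4*j ↔ 3 * Real.pi / 2 < θ := by
    rw [hθ, lt_div_iff₀ hq0]
    constructor
    · intro h; have : (3*q:ℝ) < 4*j := by exact_mod_cast h
      nlinarith [Real.pi_pos]
    · intro h
      have : (3*q:ℝ) < 4*j := by nlinarith [Real.pi_pos]
      exact_mod_cast this
  rw [hlt, hgt]
  constructor
  · intro h
    by_contra hc
    push_neg at hc
    have := Real.cos_nonpos_of_pi_div_two_le_of_le hc.1 (by linarith)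
    linarith
  · rintro (h | h)
    · exact Real.cos_pos_of_mem_Ioo ⟨by linarith [Real.pi_pos], h⟩
    · rw [← Real.cos_sub_two_pi]
      exact Real.cos_pos_of_mem_Ioo ⟨by linarith, by linarith [Real.pi_pos]⟩

theorem count_pos_re_roots_of_unity (q : ℕ) (hq : 1 ≤ q) (ω : ℂ) (hω : IsPrimitiveRoot ω q) :
    ((Finset.range q).filter fun ℓ => 0 < (ω ^ ℓ).re).card = 2 * ((q - 1) / 4) + 1 := by
  have hζ : IsPrimitiveRoot (Complex.exp (2 * Real.pi * Complex.I / q)) q :=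
    Complex.isPrimitiveRoot_exp q (by omega)
  rw [card_filter_re_eq q hq ω hω, ← card_filter_re_eq q hq _ hζ, ← aux_count_re q hq]
  congr 1
  apply Finset.filter_congr
  intro j hj
  simp only [Finset.mem_range] at hj
  simp only [re_pos_iff_aux q j hq hj]
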